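/- Let G and H be short dicotic games. Then G ≽ H (mod D⁻) if and only if the following three conditions all hold: (i) o(G) ≥ o(H); (ii) for every right option G^R of G, either there is a right option H^R of H with G^R ≽ H^R (mod D⁻), or there is a left option G^{RL} of G^R with G^{RL} ≽ H (mod D⁻); (iii) for every left option H^L of H, either there is a left option G^L of G with G^L ≽ H^L (mod D⁻), or there is a right option H^{LR} of H^L with G ≽ H^{LR} (mod D⁻). -/

import Mathlib

universe u

namespace SetTheory

/-- Pre-game, as defined in Mathlib (December 2024), `Mathlib/SetTheory/Game/PGame.lean`;
removed from current Mathlib, restored here with its old definition. -/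
inductive PGame : Type (u + 1)
  | mk : ∀ α β : Type u, (α → PGame) → (β → PGame) → PGame

namespace PGame

def LeftMoves : PGame → Type u
  | mk l _ _ _ => l

def RightMoves : PGame → Type u
  | mk _ r _ _ => r

def moveLeft : ∀ g : PGame, LeftMoves g → PGame
  | mk _l _ L _ => L

def moveRight : ∀ g : PGame, RightMoves g → PGame
  | mk _ _r _ R => R

inductive IsOption : PGame → PGame → Prop
  | moveLeft {x : PGame} (i : x.LeftMoves) : IsOption (x.moveLeft i) x
  | moveRight {x : PGame} (i : x.RightMoves) : IsOption (x.moveRight i) x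

noncomputable def birthday : PGame.{u} → Ordinal.{u}
  | ⟨_, _, xL, xR⟩ =>
    max (Ordinal.lsub.{u, u} fun i => birthday (xL i)) (Ordinal.lsub.{u, u} fun i => birthday (xR i))

theorem birthday_moveLeft_lt {x : PGame} (i : x.LeftMoves) :
    (x.moveLeft i).birthday < x.birthday := by
  cases x; rw [birthday]; exact lt_max_of_lt_left (Ordinal.lt_lsub _ i)

theorem birthday_moveRight_lt {x : PGame} (i : x.RightMoves) :
    (x.moveRight i).birthday < x.birthday := by
  cases x; rw [birthday]; exact lt_max_of_lt_right (Ordinal.lt_lsub _ i)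

instance : Zero PGame :=
  ⟨⟨PEmpty, PEmpty, PEmpty.elim, PEmpty.elim⟩⟩

def star : PGame.{u} :=
  ⟨PUnit, PUnit, fun _ => 0, fun _ => 0⟩

def neg : PGame → PGame
  | ⟨l, r, L, R⟩ => ⟨r, l, fun i => neg (R i), fun i => neg (L i)⟩

instance : Neg PGame :=
  ⟨neg⟩

noncomputable instance : Add PGame.{u} :=
  ⟨fun x y => by
    induction x generalizing y with
    | mk xl xr _ _ IHxl IHxr =>
      induction y with
      | mk yl yr yL yR IHyl IHyr =>
        exact ⟨xl ⊕ yl, xr ⊕ yr, Sum.rec (fun i => IHxl i (mk yl yr yL yR)) IHyl,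
          Sum.rec (fun i => IHxr i (mk yl yr yL yR)) IHyr⟩⟩

def Identical : PGame.{u} → PGame.{u} → Prop
  | mk _ _ xL xR, mk _ _ yL yR =>
    Relator.BiTotal (fun i j ↦ Identical (xL i) (yL j)) ∧
      Relator.BiTotal (fun i j ↦ Identical (xR i) (yR j))

end PGame

end SetTheory

open SetTheory PGame

namespace MisereDicot

def Follower (G' G : PGame) : Prop := Relation.ReflTransGen PGame.IsOption G' G

def IsShort (G : PGame) : Prop :=
  ∀ G', Follower G' G → Finite G'.LeftMoves ∧ Finite G'.RightMoves

def Dicot (G : PGame) : Prop :=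
  ∀ G', Follower G' G → (IsEmpty G'.LeftMoves ↔ IsEmpty G'.RightMoves)

mutual
def LeftWinsFirst (G : PGame) : Prop :=
  IsEmpty G.LeftMoves ∨ ∃ i, ¬ RightWinsFirst (G.moveLeft i)
termination_by G.birthday
decreasing_by exact PGame.birthday_moveLeft_lt i

def RightWinsFirst (G : PGame) : Prop :=
  IsEmpty G.RightMoves ∨ ∃ j, ¬ LeftWinsFirst (G.moveRight j)
termination_by G.birthday
decreasing_by exact PGame.birthday_moveRight_lt j
end

inductive MOutcome : Type
  | L | N | P | R
deriving DecidableEq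

instance : LE MOutcome := ⟨fun a b => a = b ∨ a = .R ∨ b = .L⟩

noncomputable def outcome (G : PGame) : MOutcome := by
  classical
  exact if LeftWinsFirst G then (if RightWinsFirst G then .N else .L)
        else (if RightWinsFirst G then .R else .P)

def Dge (G H : PGame) : Prop :=
  ∀ X : PGame, IsShort X → Dicot X → outcome (H + X) ≤ outcome (G + X)

def Deq (G H : PGame) : Prop :=
  ∀ X : PGame, IsShort X → Dicot X → outcome (G + X) = outcome (H + X)

def Dgt (G H : PGame) : Prop := Dge G H ∧ ¬ Deq G H

def DInvertible (G : PGame) : Prop :=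
  ∃ H : PGame, IsShort H ∧ Dicot H ∧ Deq (G + H) 0

/-- The left option `G^L_i` is reversible through its right option `(G^L_i)^R_j ≼ G`. -/
def LeftReversibleAt (G : PGame) (i : G.LeftMoves) (j : (G.moveLeft i).RightMoves) : Prop :=
  Dge G ((G.moveLeft i).moveRight j)

def RightReversibleAt (G : PGame) (j : G.RightMoves) (i : (G.moveRight j).LeftMoves) : Prop :=
  Dge ((G.moveRight j).moveLeft i) G

/-- `G` has a dominated left option (removable by the Domination theorem). -/
def LeftDominated (G : PGame) : Prop :=
  ∃ i i' : G.LeftMoves, ¬ (G.moveLeft i).Identical (G.moveLeft i') ∧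
    Dge (G.moveLeft i') (G.moveLeft i)

def RightDominated (G : PGame) : Prop :=
  ∃ j j' : G.RightMoves, ¬ (G.moveRight j).Identical (G.moveRight j') ∧
    Dge (G.moveRight j) (G.moveRight j')

/-- `G` has a non-atomic reversible left option (bypassable). -/
def LeftNonAtomicReversible (G : PGame) : Prop :=
  ∃ i j, LeftReversibleAt G i j ∧ Nonempty ((G.moveLeft i).moveRight j).LeftMoves

def RightNonAtomicReversible (G : PGame) : Prop :=
  ∃ j i, RightReversibleAt G j i ∧ Nonempty ((G.moveRight j).moveLeft i).RightMoves

/-- `G` has an atomic-reversible left option to which the atomic-reversibility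
replacement applies nontrivially (i.e. changing the set of options): either some
other left option is a winning first move for Left (so the option is removable),
or the option is not already `*`. -/
def LeftAtomicReducible (G : PGame) : Prop :=
  ∃ i j, LeftReversibleAt G i j ∧ IsEmpty ((G.moveLeft i).moveRight j).LeftMoves ∧
    ((∃ i', ¬ (G.moveLeft i').Identical (G.moveLeft i) ∧ ¬ RightWinsFirst (G.moveLeft i')) ∨
      ¬ (G.moveLeft i).Identical star)

def RightAtomicReducible (G : PGame) : Prop :=
  ∃ j i, RightReversibleAt G j i ∧ IsEmpty ((G.moveRight j).moveLeft i).RightMoves ∧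
    ((∃ j', ¬ (G.moveRight j').Identical (G.moveRight j) ∧ ¬ LeftWinsFirst (G.moveRight j')) ∨
      ¬ (G.moveRight j).Identical star)

/-- The Substitution theorem applies to `G`: `G = {A | C}` with `A` an
atomic-reversible left option and `C` an atomic-reversible right option. -/
def SubstitutionReducible (G : PGame) : Prop :=
  (∀ i i' : G.LeftMoves, (G.moveLeft i).Identical (G.moveLeft i')) ∧
  (∀ j j' : G.RightMoves, (G.moveRight j).Identical (G.moveRight j')) ∧
  (∃ i j, LeftReversibleAt G i j ∧ IsEmpty ((G.moveLeft i).moveRight j).LeftMoves) ∧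
  (∃ j i, RightReversibleAt G j i ∧ IsEmpty ((G.moveRight j).moveLeft i).RightMoves)

/-- `G` is in canonical form: no follower admits any of the misère-dicot
simplifications (domination, non-atomic reversibility, atomic reversibility,
substitution) producing an equivalent game with a different set of options. -/
def CanonicalForm (G : PGame) : Prop :=
  ∀ G', Follower G' G →
    ¬ (LeftDominated G' ∨ RightDominated G' ∨
       LeftNonAtomicReversible G' ∨ RightNonAtomicReversible G' ∨
       LeftAtomicReducible G' ∨ RightAtomicReducible G' ∨
       SubstitutionReducible G')

/-- The game `*2 = {0, * | 0, *}`. -/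
def star2 : PGame :=
  PGame.mk Bool Bool (fun b => cond b star 0) (fun b => cond b star 0)

open Classical in
/-- The adjoint `G°` of `G`. -/
noncomputable def adjoint : PGame → PGame
  | PGame.mk l r L R =>
    if IsEmpty l ∧ IsEmpty r then star
    else if IsEmpty l then PGame.mk r PUnit (fun j => adjoint (R j)) (fun _ => 0)
    else if IsEmpty r then PGame.mk PUnit l (fun _ => 0) (fun i => adjoint (L i))
    else PGame.mk r l (fun j => adjoint (R j)) (fun i => adjoint (L i))

/-- A universe of short games: a class closed under taking options, disjunctive
sums and conjugates. -/
structure GameUniverse where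
  mem : PGame → Prop
  short_mem : ∀ G, mem G → IsShort G
  isOption_mem : ∀ G G', mem G → PGame.IsOption G' G → mem G'
  add_mem : ∀ G H, mem G → mem H → mem (G + H)
  neg_mem : ∀ G, mem G → mem (-G)

/-- `G ≽ H` modulo the universe `U`. -/
def UGe (U : GameUniverse) (G H : PGame) : Prop :=
  ∀ X : PGame, U.mem X → outcome (H + X) ≤ outcome (G + X)

/-- `G = H` modulo the universe `U`. -/
def UEq (U : GameUniverse) (G H : PGame) : Prop :=
  ∀ X : PGame, U.mem X → outcome (G + X) = outcome (H + X)

/-- `G ≻ H` modulo the universe `U`. -/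
def UGt (U : GameUniverse) (G H : PGame) : Prop := UGe U G H ∧ ¬ UEq U G H

/-- `J` is invertible in the universe `U`. -/
def UInvertible (U : GameUniverse) (J : PGame) : Prop :=
  ∃ J' : PGame, U.mem J' ∧ UEq U (J + J') 0

end MisereDicot

namespace SetTheory.PGame

theorem leftMoves_add : ∀ x y : PGame.{u}, (x + y).LeftMoves = (x.LeftMoves ⊕ y.LeftMoves)
  | ⟨_, _, _, _⟩, ⟨_, _, _, _⟩ => rfl

theorem rightMoves_add : ∀ x y : PGame.{u}, (x + y).RightMoves = (x.RightMoves ⊕ y.RightMoves)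
  | ⟨_, _, _, _⟩, ⟨_, _, _, _⟩ => rfl

def toLeftMovesAdd {x y : PGame} : x.LeftMoves ⊕ y.LeftMoves ≃ (x + y).LeftMoves :=
  Equiv.cast (leftMoves_add x y).symm

def toRightMovesAdd {x y : PGame} : x.RightMoves ⊕ y.RightMoves ≃ (x + y).RightMoves :=
  Equiv.cast (rightMoves_add x y).symm

theorem add_moveLeft_inl {x : PGame} (y : PGame) (i : x.LeftMoves) :
    (x + y).moveLeft (toLeftMovesAdd (Sum.inl i)) = x.moveLeft i + y := by
  cases x; cases y; rfl

theorem add_moveLeft_inr (x : PGame) {y : PGame} (i : y.LeftMoves) :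
    (x + y).moveLeft (toLeftMovesAdd (Sum.inr i)) = x + y.moveLeft i := by
  cases x; cases y; rfl

theorem add_moveRight_inl {x : PGame} (y : PGame) (i : x.RightMoves) :
    (x + y).moveRight (toRightMovesAdd (Sum.inl i)) = x.moveRight i + y := by
  cases x; cases y; rfl

theorem add_moveRight_inr (x : PGame) {y : PGame} (i : y.RightMoves) :
    (x + y).moveRight (toRightMovesAdd (Sum.inr i)) = x + y.moveRight i := by
  cases x; cases y; rfl

theorem isOption_iff (x y : PGame) :
    IsOption x y ↔ (∃ i, x = y.moveLeft i) ∨ ∃ i, x = y.moveRight i := by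
  constructor
  · rintro (⟨i⟩ | ⟨i⟩)
    · exact .inl ⟨i, rfl⟩
    · exact .inr ⟨i, rfl⟩
  · rintro (⟨i, rfl⟩ | ⟨i, rfl⟩)
    · exact .moveLeft i
    · exact .moveRight i

instance isEmpty_zero_leftMoves : IsEmpty (LeftMoves 0) := inferInstanceAs (IsEmpty PEmpty)

instance isEmpty_zero_rightMoves : IsEmpty (RightMoves 0) := inferInstanceAs (IsEmpty PEmpty)

instance finite_zero_leftMoves : Finite (LeftMoves 0) := inferInstanceAs (Finite PEmpty)

instance finite_zero_rightMoves : Finite (RightMoves 0) := inferInstanceAs (Finite PEmpty)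

instance unique_star_leftMoves : Unique (LeftMoves star) := inferInstanceAs (Unique PUnit)

instance unique_star_rightMoves : Unique (RightMoves star) := inferInstanceAs (Unique PUnit)

end SetTheory.PGame

namespace MisereDicot

/-! ### Basic unfolding lemmas -/

lemma lwf_iff (G : PGame) :
    LeftWinsFirst G ↔ IsEmpty G.LeftMoves ∨ ∃ i, ¬ RightWinsFirst (G.moveLeft i) := by
  rw [LeftWinsFirst]

lemma rwf_iff (G : PGame) :
    RightWinsFirst G ↔ IsEmpty G.RightMoves ∨ ∃ j, ¬ LeftWinsFirst (G.moveRight j) := by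
  rw [RightWinsFirst]

lemma mle_iff (a b : MOutcome) : a ≤ b ↔ (a = b ∨ a = .R ∨ b = .L) := Iff.rfl

lemma outcome_le_iff (A B : PGame) :
    outcome A ≤ outcome B ↔
      ((LeftWinsFirst A → LeftWinsFirst B) ∧ (RightWinsFirst B → RightWinsFirst A)) := by
  classical
  by_cases hla : LeftWinsFirst A <;> by_cases hra : RightWinsFirst A <;>
    by_cases hlb : LeftWinsFirst B <;> by_cases hrb : RightWinsFirst B <;>
    simp [outcome, hla, hra, hlb, hrb, mle_iff]

lemma lwf_add_iff (A B : PGame) :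
    LeftWinsFirst (A + B) ↔
      (IsEmpty A.LeftMoves ∧ IsEmpty B.LeftMoves) ∨
      (∃ i, ¬ RightWinsFirst (A.moveLeft i + B)) ∨
      (∃ i, ¬ RightWinsFirst (A + B.moveLeft i)) := by
  rw [lwf_iff]
  apply or_congr
  · rw [← isEmpty_sum]
    exact (Equiv.isEmpty_congr toLeftMovesAdd).symm
  · rw [Equiv.exists_congr_left (toLeftMovesAdd (x := A) (y := B)).symm]
    simp only [Equiv.symm_symm, Sum.exists, PGame.add_moveLeft_inl, PGame.add_moveLeft_inr]

lemma rwf_add_iff (A B : PGame) :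
    RightWinsFirst (A + B) ↔
      (IsEmpty A.RightMoves ∧ IsEmpty B.RightMoves) ∨
      (∃ j, ¬ LeftWinsFirst (A.moveRight j + B)) ∨
      (∃ j, ¬ LeftWinsFirst (A + B.moveRight j)) := by
  rw [rwf_iff]
  apply or_congr
  · rw [← isEmpty_sum]
    exact (Equiv.isEmpty_congr toRightMovesAdd).symm
  · rw [Equiv.exists_congr_left (toRightMovesAdd (x := A) (y := B)).symm]
    simp only [Equiv.symm_symm, Sum.exists, PGame.add_moveRight_inl, PGame.add_moveRight_inr]

/-! ### Followers -/

lemma follower_cases {C G : PGame} :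
    Follower C G ↔ C = G ∨ (∃ i, Follower C (G.moveLeft i)) ∨ (∃ j, Follower C (G.moveRight j)) := by
  constructor
  · intro h
    rcases Relation.ReflTransGen.cases_tail h with h | ⟨c, hc, ho⟩
    · exact Or.inl h.symm
    · rcases (PGame.isOption_iff _ _).mp ho with ⟨i, rfl⟩ | ⟨j, rfl⟩
      · exact Or.inr (Or.inl ⟨i, hc⟩)
      · exact Or.inr (Or.inr ⟨j, hc⟩)
  · rintro (rfl | ⟨i, h⟩ | ⟨j, h⟩)
    · exact Relation.ReflTransGen.refl
    · exact h.tail (PGame.IsOption.moveLeft i)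
    · exact h.tail (PGame.IsOption.moveRight j)

lemma isShort_def {G : PGame} :
    IsShort G ↔ Finite G.LeftMoves ∧ Finite G.RightMoves ∧
      (∀ i, IsShort (G.moveLeft i)) ∧ (∀ j, IsShort (G.moveRight j)) := by
  constructor
  · intro h
    exact ⟨(h G .refl).1, (h G .refl).2,
      fun i C hC => h C (follower_cases.mpr (.inr (.inl ⟨i, hC⟩))),
      fun j C hC => h C (follower_cases.mpr (.inr (.inr ⟨j, hC⟩)))⟩
  · rintro ⟨f1, f2, hl, hr⟩ C hC
    rcases follower_cases.mp hC with rfl | ⟨i, h⟩ | ⟨j, h⟩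
    · exact ⟨f1, f2⟩
    · exact hl i C h
    · exact hr j C h

lemma dicot_def {G : PGame} :
    Dicot G ↔ (IsEmpty G.LeftMoves ↔ IsEmpty G.RightMoves) ∧
      (∀ i, Dicot (G.moveLeft i)) ∧ (∀ j, Dicot (G.moveRight j)) := by
  constructor
  · intro h
    exact ⟨h G .refl,
      fun i C hC => h C (follower_cases.mpr (.inr (.inl ⟨i, hC⟩))),
      fun j C hC => h C (follower_cases.mpr (.inr (.inr ⟨j, hC⟩)))⟩
  · rintro ⟨f1, hl, hr⟩ C hC
    rcases follower_cases.mp hC with rfl | ⟨i, h⟩ | ⟨j, h⟩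
    · exact f1
    · exact hl i C h
    · exact hr j C h

lemma isShort_zero : IsShort 0 := by
  rw [isShort_def]
  exact ⟨by infer_instance, by infer_instance, fun i => isEmptyElim i, fun j => isEmptyElim j⟩

lemma dicot_zero : Dicot 0 := by
  rw [dicot_def]
  exact ⟨iff_of_true PGame.isEmpty_zero_leftMoves PGame.isEmpty_zero_rightMoves,
    fun i => isEmptyElim i, fun j => isEmptyElim j⟩

lemma isShort_star : IsShort star := by
  rw [isShort_def]
  exact ⟨by infer_instance, by infer_instance, fun _ => isShort_zero, fun _ => isShort_zero⟩

lemma dicot_star : Dicot star := by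
  rw [dicot_def]
  refine ⟨iff_of_false (not_isEmpty_of_nonempty _) (not_isEmpty_of_nonempty _),
    fun _ => dicot_zero, fun _ => dicot_zero⟩


lemma isOption_add {x A B : PGame} (h : PGame.IsOption x (A + B)) :
    (∃ a, PGame.IsOption a A ∧ x = a + B) ∨ (∃ b, PGame.IsOption b B ∧ x = A + b) := by
  rcases (PGame.isOption_iff _ _).mp h with ⟨i, rfl⟩ | ⟨j, rfl⟩
  · obtain ⟨k, rfl⟩ := toLeftMovesAdd.surjective i
    rcases k with a | b
    · exact .inl ⟨A.moveLeft a, .moveLeft a, PGame.add_moveLeft_inl B a⟩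
    · exact .inr ⟨B.moveLeft b, .moveLeft b, PGame.add_moveLeft_inr A b⟩
  · obtain ⟨k, rfl⟩ := toRightMovesAdd.surjective j
    rcases k with a | b
    · exact .inl ⟨A.moveRight a, .moveRight a, PGame.add_moveRight_inl B a⟩
    · exact .inr ⟨B.moveRight b, .moveRight b, PGame.add_moveRight_inr A b⟩

lemma follower_add {C A B : PGame} (h : Follower C (A + B)) :
    ∃ A' B', Follower A' A ∧ Follower B' B ∧ C = A' + B' := by
  induction h using Relation.ReflTransGen.head_induction_on with
  | refl => exact ⟨A, B, .refl, .refl, rfl⟩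
  | head h' _ ih =>
    obtain ⟨A', B', hA', hB', rfl⟩ := ih
    rcases isOption_add h' with ⟨a, ha, rfl⟩ | ⟨b, hb, rfl⟩
    · exact ⟨a, B', .head ha hA', hB', rfl⟩
    · exact ⟨A', b, hA', .head hb hB', rfl⟩

lemma isShort_add {A B : PGame} (hA : IsShort A) (hB : IsShort B) : IsShort (A + B) := by
  intro C hC
  obtain ⟨A', B', hA', hB', rfl⟩ := follower_add hC
  have h1 := hA A' hA'; have h2 := hB B' hB'
  constructor
  · rw [PGame.leftMoves_add]
    have := h1.1; have := h2.1
    infer_instance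
  · rw [PGame.rightMoves_add]
    have := h1.2; have := h2.2
    infer_instance

lemma dicot_add {A B : PGame} (hA : Dicot A) (hB : Dicot B) : Dicot (A + B) := by
  intro C hC
  obtain ⟨A', B', hA', hB', rfl⟩ := follower_add hC
  rw [PGame.leftMoves_add, PGame.rightMoves_add, isEmpty_sum, isEmpty_sum,
    hA A' hA', hB B' hB']

/-- Adding a game with no moves at all changes nothing. -/
theorem add_empty_aux (X : PGame) (hl : IsEmpty X.LeftMoves) (hr : IsEmpty X.RightMoves)
    (A : PGame) :
    (LeftWinsFirst (A + X) ↔ LeftWinsFirst A) ∧ (RightWinsFirst (A + X) ↔ RightWinsFirst A) := by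
  constructor
  · rw [lwf_add_iff, lwf_iff]
    constructor
    · rintro (⟨h, -⟩ | ⟨i, hi⟩ | ⟨i, -⟩)
      · exact .inl h
      · exact .inr ⟨i, fun hc => hi (((add_empty_aux X hl hr (A.moveLeft i)).2).mpr hc)⟩
      · exact isEmptyElim i
    · rintro (h | ⟨i, hi⟩)
      · exact .inl ⟨h, hl⟩
      · exact .inr (.inl ⟨i, fun hc => hi (((add_empty_aux X hl hr (A.moveLeft i)).2).mp hc)⟩)
  · rw [rwf_add_iff, rwf_iff]
    constructor
    · rintro (⟨h, -⟩ | ⟨j, hj⟩ | ⟨j, -⟩)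
      · exact .inl h
      · exact .inr ⟨j, fun hc => hj (((add_empty_aux X hl hr (A.moveRight j)).1).mpr hc)⟩
      · exact isEmptyElim j
    · rintro (h | ⟨j, hj⟩)
      · exact .inl ⟨h, hr⟩
      · exact .inr (.inl ⟨j, fun hc => hj (((add_empty_aux X hl hr (A.moveRight j)).1).mp hc)⟩)
termination_by A.birthday
decreasing_by
  · exact PGame.birthday_moveLeft_lt i
  · exact PGame.birthday_moveLeft_lt i
  · exact PGame.birthday_moveRight_lt j
  · exact PGame.birthday_moveRight_lt j


lemma bday_L {l r : Type u} {L : l → PGame} {R : r → PGame} (i : l) :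
    (L i).birthday < (PGame.mk l r L R).birthday :=
  @PGame.birthday_moveLeft_lt (PGame.mk l r L R) i

lemma bday_R {l r : Type u} {L : l → PGame} {R : r → PGame} (j : r) :
    (R j).birthday < (PGame.mk l r L R).birthday :=
  @PGame.birthday_moveRight_lt (PGame.mk l r L R) j

/-! ### Adjoint -/

theorem adjoint_dicot : ∀ A : PGame.{u}, Dicot (adjoint A)
  | PGame.mk l r L R => by
    rw [adjoint]
    by_cases h1 : IsEmpty l ∧ IsEmpty r
    · rw [if_pos h1]; exact dicot_star
    · rw [if_neg h1]
      by_cases h2 : IsEmpty l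
      · rw [if_pos h2]
        have hr : ¬ IsEmpty r := fun h => h1 ⟨h2, h⟩
        rw [dicot_def]
        exact ⟨iff_of_false hr (fun h => h.elim PUnit.unit),
          fun j => adjoint_dicot (R j), fun _ => dicot_zero⟩
      · rw [if_neg h2]
        by_cases h3 : IsEmpty r
        · rw [if_pos h3]
          rw [dicot_def]
          exact ⟨iff_of_false (fun h => h.elim PUnit.unit) h2,
            fun _ => dicot_zero, fun i => adjoint_dicot (L i)⟩
        · rw [if_neg h3]
          rw [dicot_def]
          exact ⟨iff_of_false h3 h2,
            fun j => adjoint_dicot (R j), fun i => adjoint_dicot (L i)⟩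
termination_by A => A.birthday
decreasing_by
  all_goals first | exact bday_L ‹_› | exact bday_R ‹_›

theorem adjoint_short : ∀ A : PGame.{u}, IsShort A → IsShort (adjoint A)
  | PGame.mk l r L R, hA => by
    obtain ⟨hfl, hfr, hLs, hRs⟩ := isShort_def.mp hA
    rw [adjoint]
    by_cases h1 : IsEmpty l ∧ IsEmpty r
    · rw [if_pos h1]; exact isShort_star
    · rw [if_neg h1]
      by_cases h2 : IsEmpty l
      · rw [if_pos h2]
        rw [isShort_def]
        exact ⟨hfr, inferInstanceAs (Finite PUnit.{u+1}),
          fun j => adjoint_short (R j) (hRs j), fun _ => isShort_zero⟩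
      · rw [if_neg h2]
        by_cases h3 : IsEmpty r
        · rw [if_pos h3]
          rw [isShort_def]
          exact ⟨inferInstanceAs (Finite PUnit.{u+1}), hfl, fun _ => isShort_zero,
            fun i => adjoint_short (L i) (hLs i)⟩
        · rw [if_neg h3]
          rw [isShort_def]
          exact ⟨hfr, hfl, fun j => adjoint_short (R j) (hRs j),
            fun i => adjoint_short (L i) (hLs i)⟩
termination_by A _ => A.birthday
decreasing_by
  all_goals first | exact bday_L ‹_› | exact bday_R ‹_›

/-- `A + A°` is a P-position. -/
theorem adjoint_P : ∀ A : PGame.{u},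
    ¬ LeftWinsFirst (A + adjoint A) ∧ ¬ RightWinsFirst (A + adjoint A)
  | PGame.mk l r L R => by
    rw [adjoint]
    by_cases h1 : IsEmpty l ∧ IsEmpty r
    · rw [if_pos h1]
      obtain ⟨hl, hr⟩ := h1
      constructor
      · rw [lwf_add_iff]
        rintro (⟨-, h⟩ | ⟨i, -⟩ | ⟨t, ht⟩)
        · exact h.elim PUnit.unit
        · exact hl.elim i
        · refine ht ?_
          have : star.moveLeft t = 0 := rfl
          rw [this, rwf_add_iff]
          exact .inl ⟨hr, PGame.isEmpty_zero_rightMoves⟩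
      · rw [rwf_add_iff]
        rintro (⟨-, h⟩ | ⟨j, -⟩ | ⟨t, ht⟩)
        · exact h.elim PUnit.unit
        · exact hr.elim j
        · refine ht ?_
          have : star.moveRight t = 0 := rfl
          rw [this, lwf_add_iff]
          exact .inl ⟨hl, PGame.isEmpty_zero_leftMoves⟩
    · rw [if_neg h1]
      by_cases h2 : IsEmpty l
      · rw [if_pos h2]
        have hr : ¬ IsEmpty r := fun h => h1 ⟨h2, h⟩
        constructor
        · rw [lwf_add_iff]
          rintro (⟨-, h⟩ | ⟨i, -⟩ | ⟨t, ht⟩)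
          · exact hr h
          · exact h2.elim i
          · refine ht ?_
            rw [rwf_add_iff]
            exact .inr (.inl ⟨t, (adjoint_P (R t)).1⟩)
        · rw [rwf_add_iff]
          rintro (⟨-, h⟩ | ⟨j, hj⟩ | ⟨t, ht⟩)
          · exact h.elim PUnit.unit
          · refine hj ?_
            rw [lwf_add_iff]
            exact .inr (.inr ⟨j, (adjoint_P (R j)).2⟩)
          · refine ht ?_
            rw [lwf_add_iff]
            exact .inl ⟨h2, PGame.isEmpty_zero_leftMoves⟩
      · rw [if_neg h2]
        by_cases h3 : IsEmpty r
        · rw [if_pos h3]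
          constructor
          · rw [lwf_add_iff]
            rintro (⟨-, h⟩ | ⟨i, hi⟩ | ⟨t, ht⟩)
            · exact h.elim PUnit.unit
            · refine hi ?_
              rw [rwf_add_iff]
              exact .inr (.inr ⟨i, (adjoint_P (L i)).1⟩)
            · refine ht ?_
              rw [rwf_add_iff]
              exact .inl ⟨h3, PGame.isEmpty_zero_rightMoves⟩
          · rw [rwf_add_iff]
            rintro (⟨-, h⟩ | ⟨j, -⟩ | ⟨t, ht⟩)
            · exact h2 h
            · exact h3.elim j
            · refine ht ?_
              rw [lwf_add_iff]
              exact .inr (.inl ⟨t, (adjoint_P (L t)).2⟩)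
        · rw [if_neg h3]
          constructor
          · rw [lwf_add_iff]
            rintro (⟨-, h⟩ | ⟨i, hi⟩ | ⟨t, ht⟩)
            · exact h3 h
            · refine hi ?_
              rw [rwf_add_iff]
              exact .inr (.inr ⟨i, (adjoint_P (L i)).1⟩)
            · refine ht ?_
              rw [rwf_add_iff]
              exact .inr (.inl ⟨t, (adjoint_P (R t)).1⟩)
          · rw [rwf_add_iff]
            rintro (⟨-, h⟩ | ⟨j, hj⟩ | ⟨t, ht⟩)
            · exact h2 h
            · refine hj ?_
              rw [lwf_add_iff]
              exact .inr (.inr ⟨j, (adjoint_P (R j)).2⟩)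
            · refine ht ?_
              rw [lwf_add_iff]
              exact .inr (.inl ⟨t, (adjoint_P (L t)).2⟩)
termination_by A => A.birthday
decreasing_by
  all_goals first | exact bday_L ‹_› | exact bday_R ‹_›


/-! ### Helpers -/

lemma finite_punit : Finite PUnit.{v} := inferInstance

lemma isShort_moveLeft {G : PGame} (h : IsShort G) (i : G.LeftMoves) :
    IsShort (G.moveLeft i) := (isShort_def.mp h).2.2.1 i

lemma isShort_moveRight {G : PGame} (h : IsShort G) (j : G.RightMoves) :
    IsShort (G.moveRight j) := (isShort_def.mp h).2.2.2 j

lemma dicot_moveLeft {G : PGame} (h : Dicot G) (i : G.LeftMoves) :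
    Dicot (G.moveLeft i) := (dicot_def.mp h).2.1 i

lemma dicot_moveRight {G : PGame} (h : Dicot G) (j : G.RightMoves) :
    Dicot (G.moveRight j) := (dicot_def.mp h).2.2 j

lemma not_dge {A B : PGame} (h : ¬ Dge A B) :
    ∃ X, IsShort X ∧ Dicot X ∧
      ((LeftWinsFirst (B + X) ∧ ¬ LeftWinsFirst (A + X)) ∨
       (RightWinsFirst (A + X) ∧ ¬ RightWinsFirst (B + X))) := by
  unfold Dge at h
  push_neg at h
  obtain ⟨X, hs, hd, hle⟩ := h
  refine ⟨X, hs, hd, ?_⟩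
  rw [outcome_le_iff] at hle
  tauto

/-! ### Sufficiency -/

theorem suffic (G H : PGame) (hGd : Dicot G) (hHd : Dicot H)
    (h1 : outcome H ≤ outcome G)
    (h2 : ∀ j : G.RightMoves,
      (∃ j' : H.RightMoves, Dge (G.moveRight j) (H.moveRight j')) ∨
      (∃ i : (G.moveRight j).LeftMoves, Dge ((G.moveRight j).moveLeft i) H))
    (h3 : ∀ i : H.LeftMoves,
      (∃ i' : G.LeftMoves, Dge (G.moveLeft i') (H.moveLeft i)) ∨
      (∃ j : (H.moveLeft i).RightMoves, Dge G ((H.moveLeft i).moveRight j)))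
    (X : PGame) (hXs : IsShort X) (hXd : Dicot X) :
    (LeftWinsFirst (H + X) → LeftWinsFirst (G + X)) ∧
    (RightWinsFirst (G + X) → RightWinsFirst (H + X)) := by
  constructor
  · intro hL
    rw [lwf_add_iff] at hL
    rcases hL with ⟨hHl, hXl⟩ | ⟨i, hi⟩ | ⟨k, hk⟩
    · have hXr : IsEmpty X.RightMoves := (dicot_def.mp hXd).1.mp hXl
      have hLH : LeftWinsFirst H := (lwf_iff H).mpr (.inl hHl)
      have hLG : LeftWinsFirst G := ((outcome_le_iff H G).mp h1).1 hLH
      exact ((add_empty_aux X hXl hXr G).1).mpr hLG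
    · rcases h3 i with ⟨i', hd⟩ | ⟨j, hd⟩
      · have hle := (outcome_le_iff _ _).mp (hd X hXs hXd)
        rw [lwf_add_iff]
        exact .inr (.inl ⟨i', fun hc => hi (hle.2 hc)⟩)
      · rw [rwf_add_iff] at hi
        push_neg at hi
        have hle := (outcome_le_iff _ _).mp (hd X hXs hXd)
        exact hle.1 (hi.2.1 j)
    · have hrec := suffic G H hGd hHd h1 h2 h3 (X.moveLeft k)
        (isShort_moveLeft hXs k) (dicot_moveLeft hXd k)
      rw [lwf_add_iff]
      exact .inr (.inr ⟨k, fun hc => hk (hrec.2 hc)⟩)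
  · intro hR
    rw [rwf_add_iff] at hR
    rcases hR with ⟨hGr, hXr⟩ | ⟨j, hj⟩ | ⟨k, hk⟩
    · have hXl : IsEmpty X.LeftMoves := (dicot_def.mp hXd).1.mpr hXr
      have hRG : RightWinsFirst G := (rwf_iff G).mpr (.inl hGr)
      have hRH : RightWinsFirst H := ((outcome_le_iff H G).mp h1).2 hRG
      exact ((add_empty_aux X hXl hXr H).2).mpr hRH
    · rcases h2 j with ⟨j', hd⟩ | ⟨i, hd⟩
      · have hle := (outcome_le_iff _ _).mp (hd X hXs hXd)
        rw [rwf_add_iff]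
        exact .inr (.inl ⟨j', fun hc => hj (hle.1 hc)⟩)
      · rw [lwf_add_iff] at hj
        push_neg at hj
        have hle := (outcome_le_iff _ _).mp (hd X hXs hXd)
        exact hle.2 (hj.2.1 i)
    · have hrec := suffic G H hGd hHd h1 h2 h3 (X.moveRight k)
        (isShort_moveRight hXs k) (dicot_moveRight hXd k)
      rw [rwf_add_iff]
      exact .inr (.inr ⟨k, fun hc => hk (hrec.1 hc)⟩)
termination_by X.birthday
decreasing_by
  · exact PGame.birthday_moveLeft_lt k
  · exact PGame.birthday_moveRight_lt k

/-! ### The downlink construction -/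

theorem downlink (G H : PGame) (hGs : IsShort G) (hGd : Dicot G)
    (hHs : IsShort H) (hHd : Dicot H)
    (hL : ∀ i, ¬ Dge (G.moveLeft i) H) (hR : ∀ j, ¬ Dge G (H.moveRight j)) :
    ∃ T, IsShort T ∧ Dicot T ∧ ¬ LeftWinsFirst (G + T) ∧ ¬ RightWinsFirst (H + T) := by
  classical
  have hA : ∀ j : H.RightMoves, ∃ A, IsShort A ∧ Dicot A ∧
      ¬ RightWinsFirst (H.moveRight j + A) ∧ RightWinsFirst (G + A) := by
    intro j
    obtain ⟨X, hXs, hXd, hcase⟩ := not_dge (hR j)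
    rcases hcase with ⟨hl1, hl2⟩ | ⟨hr1, hr2⟩
    · refine ⟨PGame.mk ((H.moveRight j).RightMoves ⊕ PUnit) PUnit
        (Sum.elim (fun j' => adjoint ((H.moveRight j).moveRight j')) (fun _ => star))
        (fun _ => X), ?_, ?_, ?_, ?_⟩
      · rw [isShort_def]
        refine ⟨?_, finite_punit, ?_, fun _ => hXs⟩
        · haveI := ((isShort_moveRight hHs j) _ Relation.ReflTransGen.refl).2
          exact @Finite.instSum _ _ this finite_punit
        · rintro (j' | u)
          · exact adjoint_short _ (isShort_moveRight (isShort_moveRight hHs j) j')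
          · exact isShort_star
      · rw [dicot_def]
        refine ⟨iff_of_false (fun h => h.elim (Sum.inr PUnit.unit)) (fun h => h.elim PUnit.unit),
          ?_, fun _ => hXd⟩
        rintro (j' | u)
        · exact adjoint_dicot _
        · exact dicot_star
      · rw [rwf_add_iff]
        rintro (⟨-, h⟩ | ⟨j', hj'⟩ | ⟨t, ht⟩)
        · exact h.elim PUnit.unit
        · refine hj' ?_
          rw [lwf_add_iff]
          exact .inr (.inr ⟨Sum.inl j', (adjoint_P _).2⟩)
        · exact ht hl1
      · rw [rwf_add_iff]
        exact .inr (.inr ⟨PUnit.unit, hl2⟩)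
    · exact ⟨X, hXs, hXd, hr2, hr1⟩
  have hC : ∀ i : G.LeftMoves, ∃ C, IsShort C ∧ Dicot C ∧
      ¬ LeftWinsFirst (G.moveLeft i + C) ∧ LeftWinsFirst (H + C) := by
    intro i
    obtain ⟨X, hXs, hXd, hcase⟩ := not_dge (hL i)
    rcases hcase with ⟨hl1, hl2⟩ | ⟨hr1, hr2⟩
    · exact ⟨X, hXs, hXd, hl2, hl1⟩
    · refine ⟨PGame.mk PUnit ((G.moveLeft i).LeftMoves ⊕ PUnit)
        (fun _ => X)
        (Sum.elim (fun k => adjoint ((G.moveLeft i).moveLeft k)) (fun _ => star)),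
        ?_, ?_, ?_, ?_⟩
      · rw [isShort_def]
        refine ⟨finite_punit, ?_, fun _ => hXs, ?_⟩
        · haveI := ((isShort_moveLeft hGs i) _ Relation.ReflTransGen.refl).1
          exact @Finite.instSum _ _ this finite_punit
        · rintro (k | u)
          · exact adjoint_short _ (isShort_moveLeft (isShort_moveLeft hGs i) k)
          · exact isShort_star
      · rw [dicot_def]
        refine ⟨iff_of_false (fun h => h.elim PUnit.unit) (fun h => h.elim (Sum.inr PUnit.unit)),
          fun _ => hXd, ?_⟩
        rintro (k | u)
        · exact adjoint_dicot _
        · exact dicot_star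
      · rw [lwf_add_iff]
        rintro (⟨-, h⟩ | ⟨k, hk⟩ | ⟨t, ht⟩)
        · exact h.elim PUnit.unit
        · refine hk ?_
          rw [rwf_add_iff]
          exact .inr (.inr ⟨Sum.inl k, (adjoint_P _).1⟩)
        · exact ht hr1
      · rw [lwf_add_iff]
        exact .inr (.inr ⟨PUnit.unit, hr2⟩)
  choose A hAs hAd hA1 hA2 using hA
  choose C hCs hCd hC1 hC2 using hC
  refine ⟨PGame.mk (H.RightMoves ⊕ PUnit) (G.LeftMoves ⊕ PUnit)
      (Sum.elim A (fun _ => PGame.mk PUnit PUnit (fun _ => adjoint G) (fun _ => adjoint G)))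
      (Sum.elim C (fun _ => PGame.mk PUnit PUnit (fun _ => adjoint H) (fun _ => adjoint H))),
      ?_, ?_, ?_, ?_⟩
  · rw [isShort_def]
    refine ⟨?_, ?_, ?_, ?_⟩
    · haveI := (hHs _ Relation.ReflTransGen.refl).2
      exact @Finite.instSum _ _ this finite_punit
    · haveI := (hGs _ Relation.ReflTransGen.refl).1
      exact @Finite.instSum _ _ this finite_punit
    · rintro (j | u)
      · exact hAs j
      · rw [isShort_def]
        exact ⟨finite_punit, finite_punit,
          fun _ => adjoint_short _ hGs, fun _ => adjoint_short _ hGs⟩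
    · rintro (i | u)
      · exact hCs i
      · rw [isShort_def]
        exact ⟨finite_punit, finite_punit,
          fun _ => adjoint_short _ hHs, fun _ => adjoint_short _ hHs⟩
  · rw [dicot_def]
    refine ⟨iff_of_false (fun h => h.elim (Sum.inr PUnit.unit)) (fun h => h.elim (Sum.inr PUnit.unit)),
      ?_, ?_⟩
    · rintro (j | u)
      · exact hAd j
      · rw [dicot_def]
        exact ⟨iff_of_false (fun h => h.elim PUnit.unit) (fun h => h.elim PUnit.unit),
          fun _ => adjoint_dicot _, fun _ => adjoint_dicot _⟩
    · rintro (i | u)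
      · exact hCd i
      · rw [dicot_def]
        exact ⟨iff_of_false (fun h => h.elim PUnit.unit) (fun h => h.elim PUnit.unit),
          fun _ => adjoint_dicot _, fun _ => adjoint_dicot _⟩
  · rw [lwf_add_iff]
    rintro (⟨-, h⟩ | ⟨i, hi⟩ | ⟨t, ht⟩)
    · exact h.elim (Sum.inr PUnit.unit)
    · refine hi ?_
      rw [rwf_add_iff]
      exact .inr (.inr ⟨Sum.inl i, hC1 i⟩)
    · rcases t with j | u
      · exact ht (hA2 j)
      · refine ht ?_
        rw [rwf_add_iff]
        exact .inr (.inr ⟨PUnit.unit, (adjoint_P G).1⟩)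
  · rw [rwf_add_iff]
    rintro (⟨-, h⟩ | ⟨j, hj⟩ | ⟨t, ht⟩)
    · exact h.elim (Sum.inr PUnit.unit)
    · refine hj ?_
      rw [lwf_add_iff]
      exact .inr (.inr ⟨Sum.inl j, hA1 j⟩)
    · rcases t with i | u
      · exact ht (hC2 i)
      · refine ht ?_
        rw [lwf_add_iff]
        exact .inr (.inr ⟨PUnit.unit, (adjoint_P H).2⟩)

/-- unsubordinated order of the misère dicot universe. -/
theorem stmt5 (G H : PGame) (hGs : IsShort G) (hGd : Dicot G)
    (hHs : IsShort H) (hHd : Dicot H) :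
    Dge G H ↔
      (outcome H ≤ outcome G) ∧
      (∀ j : G.RightMoves,
        (∃ j' : H.RightMoves, Dge (G.moveRight j) (H.moveRight j')) ∨
        (∃ i : (G.moveRight j).LeftMoves, Dge ((G.moveRight j).moveLeft i) H)) ∧
      (∀ i : H.LeftMoves,
        (∃ i' : G.LeftMoves, Dge (G.moveLeft i') (H.moveLeft i)) ∨
        (∃ j : (H.moveLeft i).RightMoves, Dge G ((H.moveLeft i).moveRight j))) := by
  constructor
  · intro hge
    refine ⟨?_, ?_, ?_⟩
    · have h0 := hge 0 isShort_zero dicot_zero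
      rw [outcome_le_iff] at h0 ⊢
      have eG := add_empty_aux 0 PGame.isEmpty_zero_leftMoves PGame.isEmpty_zero_rightMoves G
      have eH := add_empty_aux 0 PGame.isEmpty_zero_leftMoves PGame.isEmpty_zero_rightMoves H
      exact ⟨fun h => eG.1.mp (h0.1 (eH.1.mpr h)), fun h => eH.2.mp (h0.2 (eG.2.mpr h))⟩
    · intro j
      by_contra hc
      push_neg at hc
      obtain ⟨T, hTs, hTd, hT1, hT2⟩ := downlink (G.moveRight j) H
        (isShort_moveRight hGs j) (dicot_moveRight hGd j) hHs hHd hc.2 hc.1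
      have hRfG : RightWinsFirst (G + T) := (rwf_add_iff G T).mpr (.inr (.inl ⟨j, hT1⟩))
      exact hT2 (((outcome_le_iff _ _).mp (hge T hTs hTd)).2 hRfG)
    · intro i
      by_contra hc
      push_neg at hc
      obtain ⟨T, hTs, hTd, hT1, hT2⟩ := downlink G (H.moveLeft i)
        hGs hGd (isShort_moveLeft hHs i) (dicot_moveLeft hHd i) hc.1 hc.2
      have hLfH : LeftWinsFirst (H + T) := (lwf_add_iff H T).mpr (.inr (.inl ⟨i, hT2⟩))
      exact hT1 (((outcome_le_iff _ _).mp (hge T hTs hTd)).1 hLfH)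
  · rintro ⟨h1, h2, h3⟩ X hXs hXd
    rw [outcome_le_iff]
    exact suffic G H hGd hHd h1 h2 h3 X hXs hXd


end MisereDicot
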